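/- The coefficient of the identity element 1 ∈ ℂˣ in the product ((1/676)Λ_{4435} − 1)((1/379)Λ_{4435} − 1)((1/266)Λ_{4435} − 1)((1/179)Λ_{4435} − 1) ∈ ℚ[ℂˣ] equals 6. -/

import Mathlib

/-- `Λ n` : the element of the group algebra `ℚ[ℂˣ]` given by the sum of the
basis elements corresponding to the `n`-th roots of unity (junk value `0` for `n = 0`). -/
noncomputable def Lambda (n : ℕ) : MonoidAlgebra ℚ ℂˣ :=
  if h : n = 0 then 0 else
    haveI : NeZero n := ⟨h⟩
    haveI : Fintype (rootsOfUnity n ℂ) := Fintype.ofFinite _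
    ∑ ζ : rootsOfUnity n ℂ, MonoidAlgebra.single (ζ : ℂˣ) (1 : ℚ)

lemma Lambda_sq (n : ℕ) [NeZero n] :
    Lambda n * Lambda n = (n : ℚ) • Lambda n := by
  have hn : n ≠ 0 := NeZero.ne n
  letI : Fintype (rootsOfUnity n ℂ) := Fintype.ofFinite _
  conv_lhs => rw [Lambda, dif_neg hn, Finset.sum_mul_sum]
  have : ∀ ζ : rootsOfUnity n ℂ,
      ∑ η : rootsOfUnity n ℂ,
        MonoidAlgebra.single ((ζ : ℂˣ)) (1:ℚ) * MonoidAlgebra.single ((η : ℂˣ)) (1:ℚ)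
        = Lambda n := by
    intro ζ
    rw [Lambda, dif_neg hn]
    rw [← Equiv.sum_comp (Equiv.mulLeft ζ) (fun η => MonoidAlgebra.single ((η : ℂˣ)) (1:ℚ))]
    simp [MonoidAlgebra.single_mul_single, Equiv.coe_mulLeft]
  rw [Finset.sum_congr rfl (fun ζ _ => this ζ), Finset.sum_const, Finset.card_univ,
    Fintype.card_eq_nat_card, Complex.card_rootsOfUnity, Nat.cast_smul_eq_nsmul]

lemma Lambda_apply_one (n : ℕ) [NeZero n] : (Lambda n).coeff 1 = 1 := by
  have hn : n ≠ 0 := NeZero.ne n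
  haveI : Fintype (rootsOfUnity n ℂ) := Fintype.ofFinite _
  rw [Lambda, dif_neg hn]
  rw [MonoidAlgebra.coeff_sum, Finsupp.finset_sum_apply]
  rw [Finset.sum_eq_single (1 : rootsOfUnity n ℂ)]
  · simp [MonoidAlgebra.coeff_single]
  · intro ζ _ hζ
    have : (ζ : ℂˣ) ≠ 1 := by
      simpa [OneMemClass.coe_eq_one] using hζ
    simp [MonoidAlgebra.coeff_single, Finsupp.single_apply, this]
  · simp

lemma aux_factor (q c : ℚ) (h : q * c = 1) (x : MonoidAlgebra ℚ ℂˣ) :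
    q • x - 1 = q • (x - c • (1 : MonoidAlgebra ℚ ℂˣ)) := by
  rw [smul_sub, smul_smul, h, one_smul]

lemma smul_one_eq_cast (c : ℚ) :
    c • (1 : MonoidAlgebra ℚ ℂˣ) = algebraMap ℚ (MonoidAlgebra ℚ ℂˣ) c :=
  (Algebra.algebraMap_eq_smul_one c).symm

theorem betti_number_deg_4435 :
    ((((1 / 676 : ℚ) • Lambda 4435 - 1) * ((1 / 379 : ℚ) • Lambda 4435 - 1)
        * ((1 / 266 : ℚ) • Lambda 4435 - 1) * ((1 / 179 : ℚ) • Lambda 4435 - 1)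
                : MonoidAlgebra ℚ ℂˣ)).coeff 1 = (6 : ℚ) := by
  haveI : NeZero 4435 := ⟨by norm_num⟩
  set R := MonoidAlgebra ℚ ℂˣ
  set L := Lambda 4435 with hLdef
  have h2 : L * L = (4435 : ℚ) • L := by
    have := Lambda_sq 4435
    norm_num at this
    exact this
  have h2' : L * L = (4435 : R) * L := by
    rw [h2, Algebra.smul_def]
    norm_num [map_ofNat]
  have key2 : (L - 676) * (L - 379) * (L - 266) * (L - 179)
      = 60994486280 * L + 12198897256 := by
    linear_combination (L * L + 2935 * L + 13790018) * h2'
  have c676 : ((676 : ℚ) • (1 : R)) = (676 : R) := by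
    rw [smul_one_eq_cast]; norm_num [map_ofNat]
  have c379 : ((379 : ℚ) • (1 : R)) = (379 : R) := by
    rw [smul_one_eq_cast]; norm_num [map_ofNat]
  have c266 : ((266 : ℚ) • (1 : R)) = (266 : R) := by
    rw [smul_one_eq_cast]; norm_num [map_ofNat]
  have c179 : ((179 : ℚ) • (1 : R)) = (179 : R) := by
    rw [smul_one_eq_cast]; norm_num [map_ofNat]
  have hA : (60994486280 : R) * L = (60994486280 : ℚ) • L := by
    rw [show (60994486280 : R) = (60994486280 : ℚ) • (1 : R) by
      rw [smul_one_eq_cast]; norm_num [map_ofNat], smul_mul_assoc, one_mul]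
  have hB : (12198897256 : R) = (12198897256 : ℚ) • (1 : R) := by
    rw [smul_one_eq_cast]; norm_num [map_ofNat]
  have key : ((1 / 676 : ℚ) • L - 1) * ((1 / 379 : ℚ) • L - 1)
      * ((1 / 266 : ℚ) • L - 1) * ((1 / 179 : ℚ) • L - 1)
      = (5 : ℚ) • L + 1 := by
    rw [aux_factor (1/676) 676 (by norm_num), aux_factor (1/379) 379 (by norm_num),
      aux_factor (1/266) 266 (by norm_num), aux_factor (1/179) 179 (by norm_num)]
    rw [c676, c379, c266, c179]
    simp only [smul_mul_assoc, mul_smul_comm, smul_smul]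
    rw [key2, hA, hB]
    rw [smul_add, smul_smul, smul_smul]
    norm_num
  rw [key]
  rw [MonoidAlgebra.coeff_add, Finsupp.add_apply, MonoidAlgebra.coeff_smul, Finsupp.smul_apply, Lambda_apply_one 4435]
  rw [MonoidAlgebra.one_def]
  simp [MonoidAlgebra.coeff_single]
  norm_num
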